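/- In CRDA, every child in the rotation set weakly improves: for all c ∈ R_C^t, U_c(μ_t(c)) ≥ U_c(μ_t^M(c)), where μ_t^M(c) is c's match after the initial MATCHING phase and μ_t(c) her match after ROTATION. -/
import Mathlib


/-- A one-to-one (partial) matching between children and homes. -/
structure Matching (C H : Type) where
  toHome : C → Option H
  toChild : H → Option C
  consistent : ∀ c h, toHome c = some h ↔ toChild h = some c

/-- A dynamic matching market: cardinal utilities, arrival times, waiting costs. -/
structure Market (C H : Type) where
  U : C → H → ℝ
  V : H → C → ℝ
  arrC : C → ℕ
  arrH : H → ℕ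
  wC : ℝ
  wH : ℝ

/-- Accept/reject action profiles of homes over time. -/
abbrev Actions (H : Type) := H → ℕ → Bool

/-- A dynamic mechanism: given the homes' action profile, a matching in each period. -/
abbrev Mechanism (C H : Type) := Actions H → ℕ → Matching C H

open scoped Classical in
/-- The counterfactual profile in which home `h` rejects every placement before `t'`,
accepts at `t'`, and otherwise plays as in `a`; all other homes play as in `a`. -/
noncomputable def cfProfile {H : Type} (a : Actions H) (h : H) (t' : ℕ) : Actions H :=
  fun h' k =>
    if h' = h then (if k < t' then false else if k = t' then true else a h' k)
    else a h' k

namespace Market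

variable {C H : Type}

/-- Time-discounted utility of home `h` for child `c` at time `t`:
`V_h^t(c) = V_h(c) - (t - arrival(h)) * w_H`. -/
noncomputable def Vt (M : Market C H) (h : H) (c : C) (t : ℕ) : ℝ :=
  M.V h c - ((t : ℝ) - (M.arrH h : ℝ)) * M.wH

/-- Child `c` is active (present in the market) at time `t`:
she has arrived and no home has yet accepted a placement with her. -/
def activeC (M : Market C H) (Q : Mechanism C H) (a : Actions H) (c : C) (t : ℕ) : Prop :=
  M.arrC c ≤ t ∧ ¬ ∃ k < t, ∃ h, (Q a k).toHome c = some h ∧ a h k = true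

/-- Home `h` is active (present in the market) at time `t`:
it has arrived and has not yet accepted a placement. -/
def activeH (M : Market C H) (Q : Mechanism C H) (a : Actions H) (h : H) (t : ℕ) : Prop :=
  M.arrH h ≤ t ∧ ¬ ∃ k < t, (Q a k).toChild h ≠ none ∧ a h k = true

/-- Admissibility: the mechanism only matches agents active in the current market. -/
def feasible (M : Market C H) (Q : Mechanism C H) : Prop :=
  ∀ a t c h, (Q a t).toHome c = some h → M.activeC Q a c t ∧ M.activeH Q a h t

/-- Child `c` has been adopted (placement accepted) by time `t`. -/
def childAdopted (M : Market C H) (Q : Mechanism C H) (a : Actions H) (c : C) (t : ℕ) : Prop :=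
  ∃ k ≤ t, ∃ h, (Q a k).toHome c = some h ∧ a h k = true

/-- Home `h` has accepted a placement by time `t`. -/
def homeAccepted (M : Market C H) (Q : Mechanism C H) (a : Actions H) (h : H) (t : ℕ) : Prop :=
  ∃ k ≤ t, (Q a k).toChild h ≠ none ∧ a h k = true

/-- Justified envy-freeness at every period and action profile: no mutually matched
child and home both strictly prefer each other to their assigned partners. -/
def justifiedEnvyFree (M : Market C H) (Q : Mechanism C H) : Prop :=
  ∀ a t c h h' c', (Q a t).toHome c = some h' → (Q a t).toChild h = some c' →
    ¬ (M.U c h' < M.U c h ∧ M.V h c' < M.V h c)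

/-- Individual rationality at every period and action profile. -/
def individuallyRational (M : Market C H) (Q : Mechanism C H) : Prop :=
  ∀ a t c h, (Q a t).toHome c = some h → 0 ≤ M.U c h ∧ 0 ≤ M.V h c

/-- Patience-freeness: any placement offered at `t` is weakly better (time-discounted)
than the placement the home would receive at any later `t'` in the counterfactual in
which it rejects all placements before `t'` and accepts at `t'`. -/
noncomputable def patienceFree (M : Market C H) (Q : Mechanism C H) : Prop :=
  ∀ (a : Actions H) (t : ℕ) (h : H) (c : C), (Q a t).toChild h = some c →
    ∀ t' > t, ∀ c', (Q (cfProfile a h t') t').toChild h = some c' →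
      M.Vt h c' t' ≤ M.Vt h c t

/-- Dynamic envy-freeness: justified envy-free, patience-free, individually rational. -/
noncomputable def dynamicEnvyFree (M : Market C H) (Q : Mechanism C H) : Prop :=
  M.justifiedEnvyFree Q ∧ M.patienceFree Q ∧ M.individuallyRational Q

/-- Strict non-wastefulness: after every history and action profile there is never an
active unmatched child and an active unmatched home that find each other acceptable. -/
def strictlyNonWasteful (M : Market C H) (Q : Mechanism C H) : Prop :=
  ∀ a t, ¬ ∃ c h, M.activeC Q a c t ∧ M.activeH Q a h t ∧
    0 ≤ M.U c h ∧ 0 ≤ M.V h c ∧ (Q a t).toHome c = none ∧ (Q a t).toChild h = none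

/-- Weak non-wastefulness: when every home accepts every offered placement,
no mutually acceptable unmatched pair ever remains. -/
def weaklyNonWasteful (M : Market C H) (Q : Mechanism C H) : Prop :=
  ∀ t, ¬ ∃ c h, M.activeC Q (fun _ _ => true) c t ∧ M.activeH Q (fun _ _ => true) h t ∧
    0 ≤ M.U c h ∧ 0 ≤ M.V h c ∧
    (Q (fun _ _ => true) t).toHome c = none ∧ (Q (fun _ _ => true) t).toChild h = none

/-- The mechanism is a deterministic function of the history of markets (active sets)
and past matchings. -/
def historyDetermined (M : Market C H) (Q : Mechanism C H) : Prop :=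
  ∀ a a' t,
    (∀ k ≤ t, ∀ c, M.activeC Q a c k ↔ M.activeC Q a' c k) →
    (∀ k ≤ t, ∀ h, M.activeH Q a h k ↔ M.activeH Q a' h k) →
    (∀ k < t, Q a k = Q a' k) →
    Q a t = Q a' t

/-- `x` is the realized (true-utility, time-discounted) payoff of home `h`:
the time-discounted utility of an accepted placement, or `0` if `h` never accepts. -/
noncomputable def payoffIs (M : Market C H) (Q : Mechanism C H) (a : Actions H)
    (h : H) (x : ℝ) : Prop :=
  (∃ t c, (Q a t).toChild h = some c ∧ a h t = true ∧ x = M.Vt h c t) ∨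
  ((∀ t c, (Q a t).toChild h = some c → a h t = false) ∧ x = 0)

end Market

namespace Market

variable {C H : Type}

/-- Stability (feasibility, individual rationality and no blocking pair) of a matching
on given sets of active children and homes. -/
def IsStableOn (M : Market C H) (aC : Set C) (aH : Set H) (μ : Matching C H) : Prop :=
  (∀ c h, μ.toHome c = some h → c ∈ aC ∧ h ∈ aH ∧ 0 ≤ M.U c h ∧ 0 ≤ M.V h c) ∧
  (∀ c h, c ∈ aC → h ∈ aH → 0 ≤ M.U c h → 0 ≤ M.V h c →
    ¬ ((∀ h', μ.toHome c = some h' → M.U c h' < M.U c h) ∧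
       (∀ c', μ.toChild h = some c' → M.V h c' < M.V h c)))

end Market

namespace Market

variable {C H : Type}

/-- Characterization of the output of child-proposing Deferred Acceptance:
the child-optimal stable matching on the given sets. -/
def IsChildOptimalOn (M : Market C H) (aC : Set C) (aH : Set H) (μ : Matching C H) : Prop :=
  M.IsStableOn aC aH μ ∧
  ∀ μ', M.IsStableOn aC aH μ' → ∀ c h, μ'.toHome c = some h →
    ∃ h', μ.toHome c = some h' ∧ M.U c h ≤ M.U c h'

/-- CRDA's trigger: some home whose most recently rejected placement had
time-discounted value `prev h` gets a strictly better match in the MATCHING phase. -/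
noncomputable def crdaTrigger (M : Market C H) (prev : H → Option ℝ) (t : ℕ)
    (μM : Matching C H) : Prop :=
  ∃ h c b, μM.toChild h = some c ∧ prev h = some b ∧ b < M.Vt h c t

/-- A child is flagged for rotation: some acceptable active home is strictly preferred
to her MATCHING match, or her assigned home improves on its previously rejected placement. -/
noncomputable def crdaFlagged (M : Market C H) (aH : Set H) (prev : H → Option ℝ)
    (t : ℕ) (μM : Matching C H) (c : C) : Prop :=
  (∃ h ∈ aH, 0 ≤ M.V h c ∧ ∀ h', μM.toHome c = some h' → M.U c h' < M.U c h) ∨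
  (∃ h b, μM.toHome c = some h ∧ prev h = some b ∧ b < M.Vt h c t)

/-- The set `\hat R_C^t`: flagged or unmatched active children. -/
noncomputable def crdaHatRC (M : Market C H) (aC : Set C) (aH : Set H)
    (prev : H → Option ℝ) (t : ℕ) (μM : Matching C H) : Set C :=
  {c ∈ aC | M.crdaFlagged aH prev t μM c ∨ μM.toHome c = none}

/-- The set `R_H^t`: active homes matched to flagged children, or unmatched. -/
noncomputable def crdaRH (M : Market C H) (aC : Set C) (aH : Set H)
    (prev : H → Option ℝ) (t : ℕ) (μM : Matching C H) : Set H :=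
  {h ∈ aH | (∃ c ∈ M.crdaHatRC aC aH prev t μM, μM.toChild h = some c) ∨
    μM.toChild h = none}

/-- The set `R_C^t`: children of `\hat R_C^t` weakly below every relevant home's
previously rejected placement value. -/
noncomputable def crdaRC (M : Market C H) (aC : Set C) (aH : Set H)
    (prev : H → Option ℝ) (t : ℕ) (μM : Matching C H) : Set C :=
  {c ∈ M.crdaHatRC aC aH prev t μM |
    ∀ h ∈ M.crdaRH aC aH prev t μM, 0 ≤ M.U c h →
      ∀ b, prev h = some b → M.Vt h c t ≤ b}

/-- One period of Child Rotating Deferred Acceptance on the market given by active sets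
`aC`, `aH`, where `prev h` records the time-discounted value of home `h`'s most recently
rejected placement (if any): first child-proposing DA (`μM`); if triggered, ROTATION
re-runs child-proposing DA (`μR`) on the rotation sets, children excluded from the
rotation set become unmatched, and all other agents keep their MATCHING placements. -/
structure CRDAStep (M : Market C H) (aC : Set C) (aH : Set H)
    (prev : H → Option ℝ) (t : ℕ) where
  μM : Matching C H
  μR : Matching C H
  μ : Matching C H
  matching_opt : M.IsChildOptimalOn aC aH μM
  no_trigger : ¬ M.crdaTrigger prev t μM → μ = μM
  rot_opt : M.crdaTrigger prev t μM →
    M.IsChildOptimalOn (M.crdaRC aC aH prev t μM) (M.crdaRH aC aH prev t μM) μR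
  final_rotC : M.crdaTrigger prev t μM →
    ∀ c ∈ M.crdaRC aC aH prev t μM, μ.toHome c = μR.toHome c
  final_rotH : M.crdaTrigger prev t μM →
    ∀ h ∈ M.crdaRH aC aH prev t μM, μ.toChild h = μR.toChild h
  final_dropC : M.crdaTrigger prev t μM →
    ∀ c ∈ M.crdaHatRC aC aH prev t μM, c ∉ M.crdaRC aC aH prev t μM → μ.toHome c = none
  final_keepC : M.crdaTrigger prev t μM →
    ∀ c ∈ aC, c ∉ M.crdaHatRC aC aH prev t μM → μ.toHome c = μM.toHome c
  final_keepH : M.crdaTrigger prev t μM →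
    ∀ h ∈ aH, h ∉ M.crdaRH aC aH prev t μM → μ.toChild h = μM.toChild h

end Market

theorem aux_improves {C H : Type} [Finite C]
    (M : Market C H) (aC : Set C) (aH : Set H) (RC : Set C) (RH : Set H)
    (μM μR : Matching C H)
    (hRCsub : RC ⊆ aC) (hRHsub : RH ⊆ aH)
    (hMstab : M.IsStableOn aC aH μM)
    (hRC_RH : ∀ c h, c ∈ RC → μM.toHome c = some h → h ∈ RH)
    (hRopt : M.IsChildOptimalOn RC RH μR)
    (strictU : ∀ c h h', h ≠ h' → M.U c h ≠ M.U c h')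
    (strictV : ∀ h c c', c ≠ c' → M.V h c ≠ M.V h c')
    (c : C) (hc : c ∈ RC) :
    (μM.toHome c).elim (0 : ℝ) (M.U c) ≤ (μR.toHome c).elim (0 : ℝ) (M.U c) := by
  classical
  obtain ⟨hRstab, hRoptim⟩ := hRopt
  by_contra hlt
  push_neg at hlt
  -- the set of losers
  set Sl : Set C := {c | c ∈ RC ∧
      (μR.toHome c).elim (0 : ℝ) (M.U c) < (μM.toHome c).elim (0 : ℝ) (M.U c)} with hSl
  have hcSl : c ∈ Sl := ⟨hc, hlt⟩
  have hμRnonneg : ∀ c, (0 : ℝ) ≤ (μR.toHome c).elim (0 : ℝ) (M.U c) := by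
    intro c
    cases hh : μR.toHome c with
    | none => simp
    | some h => simpa using (hRstab.1 c h hh).2.2.1
  -- lemA
  have lemA : ∀ c ∈ Sl, ∃ h, μM.toHome c = some h ∧ h ∈ RH ∧ c ∈ RC ∧
      0 ≤ M.U c h ∧ 0 ≤ M.V h c := by
    intro c hcS
    obtain ⟨hcRC, hlt'⟩ := hcS
    cases hh : μM.toHome c with
    | none =>
      exfalso; rw [hh] at hlt'
      exact absurd hlt' (not_lt.2 (by simpa using hμRnonneg c))
    | some h =>
      obtain ⟨hcaC, hhaH, hU, hV⟩ := hMstab.1 c h hh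
      exact ⟨h, rfl, hRC_RH c h hcRC hh, hcRC, hU, hV⟩
  -- the step lemma
  have step : ∀ c ∈ Sl, ∃ h c₁, μM.toHome c = some h ∧ μR.toHome c₁ = some h ∧ c₁ ∈ Sl := by
    intro c hcS
    obtain ⟨h, hMc, hhRH, hcRC, hU, hV⟩ := lemA c hcS
    have hblock := hRstab.2 c h hcRC hhRH hU hV
    have hP : ∀ h', μR.toHome c = some h' → M.U c h' < M.U c h := by
      intro h' hh'
      have h2 := hcS.2
      rw [hMc, hh'] at h2
      simpa using h2
    have hnQ : ¬ ∀ c', μR.toChild h = some c' → M.V h c' < M.V h c :=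
      fun hQ => hblock ⟨hP, hQ⟩
    push_neg at hnQ
    obtain ⟨c₁, hc₁, hVge⟩ := hnQ
    have hRc₁ : μR.toHome c₁ = some h := (μR.consistent c₁ h).2 hc₁
    have hne : c₁ ≠ c := by
      rintro rfl
      exact lt_irrefl _ (hP h hRc₁)
    have hVlt : M.V h c < M.V h c₁ := lt_of_le_of_ne hVge (strictV h c c₁ hne.symm)
    obtain ⟨hc₁RC, _, hU₁, hV₁⟩ := hRstab.1 c₁ h hRc₁
    have hblock2 := hMstab.2 c₁ h (hRCsub hc₁RC) (hRHsub hhRH) hU₁ hV₁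
    have hQ' : ∀ c₂, μM.toChild h = some c₂ → M.V h c₂ < M.V h c₁ := by
      intro c₂ hc₂
      have h3 := (μM.consistent c h).1 hMc
      rw [hc₂] at h3
      obtain rfl : c₂ = c := Option.some.inj h3
      exact hVlt
    have hnP' : ¬ ∀ h₂, μM.toHome c₁ = some h₂ → M.U c₁ h₂ < M.U c₁ h :=
      fun hP' => hblock2 ⟨hP', hQ'⟩
    push_neg at hnP'
    obtain ⟨h₂, hMc₁, hUge⟩ := hnP'
    have hne2 : h₂ ≠ h := by
      rintro rfl
      have h3 := (μM.consistent c₁ h₂).1 hMc₁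
      rw [(μM.consistent c h₂).1 hMc] at h3
      exact hne (Option.some.inj h3).symm
    have hUlt : M.U c₁ h < M.U c₁ h₂ := lt_of_le_of_ne hUge (strictU c₁ h h₂ hne2.symm)
    refine ⟨h, c₁, hMc, hRc₁, hc₁RC, ?_⟩
    rw [hRc₁, hMc₁]
    simpa using hUlt
  -- the chain map
  choose g f h1 h2 h3 using step
  set F : C → C := fun c => if hc : c ∈ Sl then f c hc else c with hF
  have hmaps : Set.MapsTo F Sl Sl := by
    intro a ha
    simp only [hF, dif_pos ha]
    exact h3 a ha
  have hinj : Set.InjOn F Sl := by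
    intro a ha b hb hab
    simp only [hF, dif_pos ha, dif_pos hb] at hab
    have e1 : μR.toHome (f a ha) = some (g a ha) := h2 a ha
    have e2 : μR.toHome (f b hb) = some (g b hb) := h2 b hb
    rw [hab, e2] at e1
    have e4 : g b hb = g a ha := Option.some.inj e1
    have hMb := h1 b hb
    rw [e4] at hMb
    have e3 := (μM.consistent a (g a ha)).1 (h1 a ha)
    rw [(μM.consistent b (g a ha)).1 hMb] at e3
    exact (Option.some.inj e3).symm
  have hsurj : Set.SurjOn F Sl Sl :=
    (((Set.toFinite Sl).injOn_iff_bijOn_of_mapsTo hmaps).1 hinj).surjOn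
  have lemB : ∀ c ∈ Sl, ∃ h₀ c₀, c₀ ∈ Sl ∧ μM.toHome c₀ = some h₀ ∧
      μR.toHome c = some h₀ := by
    intro c hcS
    obtain ⟨c₀, hc₀, hFc⟩ := hsurj hcS
    simp only [hF, dif_pos hc₀] at hFc
    exact ⟨g c₀ hc₀, c₀, hc₀, h1 c₀ hc₀, hFc ▸ h2 c₀ hc₀⟩
  have lemC : ∀ h, (∃ c₀ ∈ Sl, μM.toHome c₀ = some h) →
      ∃ c₁, c₁ ∈ Sl ∧ μR.toHome c₁ = some h := by
    rintro h ⟨c₀, hc₀, hMc₀⟩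
    have e1 := h1 c₀ hc₀
    rw [hMc₀] at e1
    obtain rfl : h = g c₀ hc₀ := Option.some.inj e1
    exact ⟨f c₀ hc₀, h3 c₀ hc₀, h2 c₀ hc₀⟩
  have lemD : ∀ c h, c ∉ Sl → μR.toHome c = some h →
      ¬ (∃ c₀ ∈ Sl, μM.toHome c₀ = some h) := by
    intro c h hcn hRc hHS
    obtain ⟨c₁, hc₁S, hRc₁⟩ := lemC h hHS
    have e1 := (μR.consistent c h).1 hRc
    rw [(μR.consistent c₁ h).1 hRc₁] at e1
    exact hcn ((Option.some.inj e1) ▸ hc₁S)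
  -- the modified matching ν
  have hcons : ∀ c h,
      (if c ∈ Sl then μM.toHome c else μR.toHome c) = some h ↔
      (if (∃ c₀ ∈ Sl, μM.toHome c₀ = some h) then μM.toChild h else μR.toChild h) = some c := by
    intro c h
    constructor
    · intro hch
      by_cases hcS : c ∈ Sl
      · rw [if_pos hcS] at hch
        rw [if_pos ⟨c, hcS, hch⟩]
        exact (μM.consistent c h).1 hch
      · rw [if_neg hcS] at hch
        rw [if_neg (lemD c h hcS hch)]
        exact (μR.consistent c h).1 hch
    · intro hch
      by_cases hh : ∃ c₀ ∈ Sl, μM.toHome c₀ = some h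
      · rw [if_pos hh] at hch
        have hMc : μM.toHome c = some h := (μM.consistent c h).2 hch
        obtain ⟨c₀, hc₀, hMc₀⟩ := hh
        have e1 := (μM.consistent c₀ h).1 hMc₀
        rw [hch] at e1
        obtain rfl : c = c₀ := Option.some.inj e1
        rw [if_pos hc₀]
        exact hMc
      · rw [if_neg hh] at hch
        have hRc : μR.toHome c = some h := (μR.consistent c h).2 hch
        have hcn : c ∉ Sl := by
          intro hcS
          obtain ⟨h₀, c₀, hc₀S, hMc₀, hRc'⟩ := lemB c hcS
          rw [hRc] at hRc'
          obtain rfl : h₀ = h := Option.some.inj hRc'.symm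
          exact hh ⟨c₀, hc₀S, hMc₀⟩
        rw [if_neg hcn]
        exact hRc
  let ν : Matching C H :=
    { toHome := fun c => if c ∈ Sl then μM.toHome c else μR.toHome c,
      toChild := fun h => if (∃ c₀ ∈ Sl, μM.toHome c₀ = some h)
        then μM.toChild h else μR.toChild h,
      consistent := hcons }
  have hνH : ∀ c, ν.toHome c = if c ∈ Sl then μM.toHome c else μR.toHome c := fun _ => rfl
  have hνC : ∀ h, ν.toChild h = if (∃ c₀ ∈ Sl, μM.toHome c₀ = some h)
      then μM.toChild h else μR.toChild h := fun _ => rfl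
  -- ν is stable on (RC, RH)
  have hνstab : M.IsStableOn RC RH ν := by
    constructor
    · intro c' h' hch
      rw [hνH] at hch
      by_cases hcS : c' ∈ Sl
      · rw [if_pos hcS] at hch
        obtain ⟨h'', hMeq, hRH', hRC', hU', hV'⟩ := lemA c' hcS
        rw [hMeq] at hch
        obtain rfl : h'' = h' := Option.some.inj hch
        exact ⟨hRC', hRH', hU', hV'⟩
      · rw [if_neg hcS] at hch
        exact hRstab.1 c' h' hch
    · rintro c' h' hcRC hhRH hU' hV' ⟨hP, hQ⟩
      by_cases hh : ∃ c₀ ∈ Sl, μM.toHome c₀ = some h'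
      · -- (c', h') would block μM
        obtain ⟨c₀, hc₀S, hMc₀⟩ := hh
        have hνCh : ν.toChild h' = μM.toChild h' := by
          rw [hνC, if_pos ⟨c₀, hc₀S, hMc₀⟩]
        refine hMstab.2 c' h' (hRCsub hcRC) (hRHsub hhRH) hU' hV' ⟨?_, ?_⟩
        · intro h₁ hMc'
          by_cases hcS : c' ∈ Sl
          · exact hP h₁ (by rw [hνH, if_pos hcS]; exact hMc')
          · -- c' not a loser: μM value ≤ μR value
            have hnl : ¬ ((μR.toHome c').elim (0 : ℝ) (M.U c') <
                (μM.toHome c').elim (0 : ℝ) (M.U c')) := fun hl => hcS ⟨hcRC, hl⟩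
            push_neg at hnl
            rw [hMc'] at hnl
            cases hRc' : μR.toHome c' with
            | some h₂ =>
              have hlt2 : M.U c' h₂ < M.U c' h' :=
                hP h₂ (by rw [hνH, if_neg hcS]; exact hRc')
              rw [hRc'] at hnl
              simp only [Option.elim] at hnl
              exact lt_of_le_of_lt hnl hlt2
            | none =>
              rw [hRc'] at hnl
              simp only [Option.elim] at hnl
              have hle0 : M.U c' h₁ ≤ M.U c' h' := le_trans hnl hU'
              refine lt_of_le_of_ne hle0 (strictU c' h₁ h' ?_)
              rintro rfl
              have e1 := (μM.consistent c' h₁).1 hMc'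
              rw [(μM.consistent c₀ h₁).1 hMc₀] at e1
              exact hcS ((Option.some.inj e1) ▸ hc₀S)
        · intro c₁ hMch
          have e1 := (μM.consistent c₀ h').1 hMc₀
          rw [hMch] at e1
          obtain rfl : c₁ = c₀ := Option.some.inj e1
          exact hQ c₁ (by rw [hνCh]; exact hMch)
      · -- (c', h') would block μR
        refine hRstab.2 c' h' hcRC hhRH hU' hV' ⟨?_, ?_⟩
        · intro h₁ hRc'
          by_cases hcS : c' ∈ Sl
          · obtain ⟨h₂, hMc', _, _, _, _⟩ := lemA c' hcS
            have hlt2 : M.U c' h₂ < M.U c' h' :=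
              hP h₂ (by rw [hνH, if_pos hcS]; exact hMc')
            have hl := hcS.2
            rw [hMc', hRc'] at hl
            simp only [Option.elim] at hl
            exact lt_trans hl hlt2
          · exact hP h₁ (by rw [hνH, if_neg hcS]; exact hRc')
        · intro c₁ hRch
          exact hQ c₁ (by rw [hνC, if_neg hh]; exact hRch)
  -- contradiction with child-optimality of μR
  obtain ⟨h, hMc, _, _, _, _⟩ := lemA c hcSl
  obtain ⟨h', hRc, hle⟩ := hRoptim ν hνstab c h (by rw [hνH, if_pos hcSl]; exact hMc)
  have hl := hcSl.2
  rw [hMc, hRc] at hl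
  simp only [Option.elim] at hl
  exact absurd hle (not_le.2 hl)

/-- The rotation-improvement lemma: in any triggered period of CRDA, every child in the
rotation set `R_C^t` weakly improves on her MATCHING-phase placement. -/
theorem crda_rotation_weakly_improves {C H : Type} [Finite C] [Finite H]
    (M : Market C H) (aC : Set C) (aH : Set H) (prev : H → Option ℝ) (t : ℕ)
    (S : Market.CRDAStep M aC aH prev t)
    (strictU : ∀ c h h', h ≠ h' → M.U c h ≠ M.U c h')
    (strictV : ∀ h c c', c ≠ c' → M.V h c ≠ M.V h c')
    (htrig : M.crdaTrigger prev t S.μM)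
    (c : C) (hc : c ∈ M.crdaRC aC aH prev t S.μM) :
    (S.μM.toHome c).elim (0 : ℝ) (M.U c) ≤ (S.μ.toHome c).elim (0 : ℝ) (M.U c) := by
  rw [S.final_rotC htrig c hc]
  refine aux_improves M aC aH (M.crdaRC aC aH prev t S.μM) (M.crdaRH aC aH prev t S.μM)
    S.μM S.μR (fun x hx => hx.1.1) (fun x hx => hx.1) S.matching_opt.1 ?_
    (S.rot_opt htrig) strictU strictV c hc
  intro c' h' hc' hM
  exact ⟨(S.matching_opt.1.1 c' h' hM).2.1,
    Or.inl ⟨c', hc'.1, (S.μM.consistent c' h').1 hM⟩⟩
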